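/- Let A be a Huber ring whose topology is induced by a finitely generated ideal I of an open subring A₀. Then the following are equivalent: (1) the set of topologically nilpotent elements of A generates the unit ideal of A; (2) every ideal of definition of any ring of definition generates the unit ideal of A; (3) every open ideal of A is the unit ideal. -/

import Mathlib

open Filter

private lemma stmt5_open_of_mem_nhds {A : Type*} [CommRing A] [TopologicalSpace A]
    [IsTopologicalRing A] (J : Ideal A) (h : (J : Set A) ∈ nhds (0 : A)) :
    IsOpen (J : Set A) :=
  AddSubgroup.isOpen_of_mem_nhds J.toAddSubgroup h

private lemma stmt5_topnil {A : Type*} [CommRing A] [TopologicalSpace A] [IsTopologicalRing A]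
    (B : Subring A) (J : Ideal B)
    (hs : ∀ U ∈ nhds (0 : A), ∃ n : ℕ, Subtype.val '' ((J ^ n : Ideal B) : Set B) ⊆ U)
    {a : A} (ha : a ∈ Subtype.val '' (J : Set B)) :
    Tendsto (fun n : ℕ => a ^ n) atTop (nhds (0 : A)) := by
  obtain ⟨x, hx, rfl⟩ := ha
  rw [Filter.tendsto_def]
  intro U hU
  obtain ⟨n, hn⟩ := hs U hU
  rw [mem_atTop_sets]
  refine ⟨n, fun m hm => ?_⟩
  have hxm : x ^ m ∈ (J ^ n : Ideal B) :=
    Ideal.pow_le_pow_right hm (Ideal.pow_mem_pow hx m)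
  exact hn ⟨x ^ m, hxm, by push_cast; ring⟩

private lemma stmt5_key {A : Type*} [CommRing A] [TopologicalSpace A] [IsTopologicalRing A]
    (S : Set A) (hS : ∀ a ∈ S, Tendsto (fun n : ℕ => a ^ n) atTop (nhds (0 : A)))
    (hspan : Ideal.span S = ⊤) (J : Ideal A) (hJ : IsOpen (J : Set A)) : J = ⊤ := by
  have hJn : (J : Set A) ∈ nhds (0 : A) := hJ.mem_nhds J.zero_mem
  have hrad : Ideal.span S ≤ J.radical := by
    rw [Ideal.span_le]
    intro a ha
    have := (hS a ha).eventually_mem hJn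
    obtain ⟨n, hn⟩ := this.exists
    exact ⟨n, hn⟩
  rw [hspan, top_le_iff] at hrad
  exact Ideal.radical_eq_top.mp hrad

theorem stmt5 {A : Type*} [CommRing A] [TopologicalSpace A] [IsTopologicalRing A]
    (A0 : Subring A) (hA0 : IsOpen (A0 : Set A)) (I : Ideal A0) (hIfg : I.FG)
    (hadic : (∀ n : ℕ, Subtype.val '' ((I ^ n : Ideal A0) : Set A0) ∈ nhds (0 : A)) ∧
      ∀ U ∈ nhds (0 : A), ∃ n : ℕ, Subtype.val '' ((I ^ n : Ideal A0) : Set A0) ⊆ U) :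
    let c1 : Prop :=
      Ideal.span {a : A | Tendsto (fun n : ℕ => a ^ n) atTop (nhds 0)} = ⊤
    let c2 : Prop := ∀ B : Subring A, IsOpen (B : Set A) → ∀ J : Ideal B, J.FG →
      ((∀ n : ℕ, Subtype.val '' ((J ^ n : Ideal B) : Set B) ∈ nhds (0 : A)) ∧
        ∀ U ∈ nhds (0 : A), ∃ n : ℕ, Subtype.val '' ((J ^ n : Ideal B) : Set B) ⊆ U) →
      Ideal.span (Subtype.val '' (J : Set B)) = ⊤
    let c3 : Prop := ∀ J : Ideal A, IsOpen (J : Set A) → J = ⊤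
    (c1 ↔ c3) ∧ (c2 ↔ c3) := by
  intro c1 c2 c3
  obtain ⟨hmem, hsub⟩ := hadic
  have hI1 : Subtype.val '' (I : Set A0) ∈ nhds (0 : A) := by
    have := hmem 1
    rwa [pow_one] at this
  constructor
  · constructor
    · -- c1 → c3
      intro h1 J hJ
      exact stmt5_key _ (fun a ha => ha) h1 J hJ
    · -- c3 → c1
      intro h3
      apply h3
      apply stmt5_open_of_mem_nhds
      refine Filter.mem_of_superset hI1 ?_
      intro a ha
      exact Ideal.subset_span (stmt5_topnil A0 I hsub ha)
  · constructor
    · -- c2 → c3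
      intro h2 J hJ
      have hspan : Ideal.span (Subtype.val '' (I : Set A0)) = ⊤ :=
        h2 A0 hA0 I hIfg ⟨hmem, hsub⟩
      exact stmt5_key _ (fun a ha => stmt5_topnil A0 I hsub ha) hspan J hJ
    · -- c3 → c2
      intro h3 B hB J hJfg hJadic
      apply h3
      apply stmt5_open_of_mem_nhds
      have hJ1 : Subtype.val '' (J : Set B) ∈ nhds (0 : A) := by
        have := hJadic.1 1
        rwa [pow_one] at this
      exact Filter.mem_of_superset hJ1 (fun a ha => Ideal.subset_span ha)
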